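/- Assume α_k → ∞ and α_k·ε_k → 0, and let the sequences satisfy the inexact penalty KKT conditions for every k. Suppose K ⊆ ℕ is infinite and x^k → x* along K. Then α_k·y_i^k → 0 along K for every index i with x*_i ≠ 0. -/

import Mathlib

open Filter Topology

noncomputable section

/-- Euclidean n-space. -/
abbrev E (n : ℕ) : Type := EuclideanSpace ℝ (Fin n)

/-- Regard a plain function as a vector of Euclidean space. -/
def vec {ι : Type*} [Fintype ι] (v : ι → ℝ) : EuclideanSpace ℝ ι :=
  (WithLp.equiv 2 (ι → ℝ)).symm v

/-- The inexact penalty KKT conditions at stage k (step 2 of the exact penalty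
algorithm). -/
def inexactKKT {n m q : ℕ} (f : E n → ℝ) (g : Fin m → E n → ℝ) (h : Fin q → E n → ℝ)
    (p : Fin n → ℝ → ℝ) (α ε : ℝ)
    (x y : E n) (νx νy : E n) (lam : Fin m → ℝ) (mu : Fin q → ℝ) : Prop :=
  (∀ i, 0 ≤ x i) ∧ (∀ i, 0 ≤ y i) ∧ (∀ i, 0 ≤ lam i) ∧
  (∀ i, 0 ≤ νx i) ∧ (∀ i, 0 ≤ νy i) ∧
  ‖gradient f x + (∑ i, lam i • gradient (g i) x) + (∑ j, mu j • gradient (h j) x) +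
      α • y - νx‖ ≤ ε ∧
  ‖vec (fun i => deriv (p i) (y i) + α * x i - νy i)‖ ≤ ε ∧
  (∀ i, |min (-(g i x)) (lam i)| ≤ ε) ∧
  ‖vec (fun j => h j x)‖ ≤ ε ∧
  (∀ i, min (x i) (νx i) ≤ ε) ∧
  (∀ i, min (y i) (νy i) ≤ ε)

lemma abs_apply_le_norm_vec {ι : Type*} [Fintype ι] (v : ι → ℝ) (i : ι) :
    |v i| ≤ ‖vec v‖ := by
  rw [EuclideanSpace.norm_eq]
  have h1 : |v i| = Real.sqrt (‖(vec v) i‖ ^ 2) := by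
    rw [Real.norm_eq_abs, sq_abs, Real.sqrt_sq_eq_abs]; rfl
  rw [h1]
  exact Real.sqrt_le_sqrt (Finset.single_le_sum
    (f := fun j => ‖(vec v) j‖ ^ 2) (fun j _ => by positivity) (Finset.mem_univ i))

/-- if α_k → ∞ and α_k·ε_k → 0, then α_k·y_i^k → 0 along K for
every index i with x*_i ≠ 0. -/
theorem stmt_19 {n m q : ℕ} (hn : 1 ≤ n) {ρ : ℝ} (hρ : 0 < ρ)
    (f : E n → ℝ) (g : Fin m → E n → ℝ) (h : Fin q → E n → ℝ)
    (hf : ContDiff ℝ 1 f) (hg : ∀ i, ContDiff ℝ 1 (g i)) (hh : ∀ j, ContDiff ℝ 1 (h j))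
    (p : Fin n → ℝ → ℝ) (s : Fin n → ℝ)
    (hp : ∀ i, ContDiff ℝ 1 (p i))
    (hconv : ∀ i, ConvexOn ℝ Set.univ (p i))
    (hspos : ∀ i, 0 < s i)
    (hmin : ∀ i t, p i (s i) ≤ p i t)
    (hstrict : ∀ i t, t ≠ s i → p i (s i) < p i t)
    (hscale : ∀ i, p i 0 - p i (s i) = ρ)
    (αk εk : ℕ → ℝ) (hαpos : ∀ k, 0 < αk k) (hεnn : ∀ k, 0 ≤ εk k)
    (hα : Tendsto αk atTop atTop)
    (hαε : Tendsto (fun k => αk k * εk k) atTop (𝓝 0))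
    (xk yk νxk νyk : ℕ → E n) (lamk : ℕ → Fin m → ℝ) (muk : ℕ → Fin q → ℝ)
    (hKKT : ∀ k, inexactKKT f g h p (αk k) (εk k) (xk k) (yk k) (νxk k) (νyk k)
      (lamk k) (muk k))
    (K : Set ℕ) (hK : K.Infinite) (xstar : E n)
    (hconv' : Tendsto xk (atTop ⊓ Filter.principal K) (𝓝 xstar)) :
    ∀ i, xstar i ≠ 0 →
      Tendsto (fun k => αk k * yk k i) (atTop ⊓ Filter.principal K) (𝓝 0) := by
  intro i hxi
  set L := atTop ⊓ Filter.principal K with hL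
  haveI : L.NeBot := by
    rw [hL, ← Nat.cofinite_eq_atTop]
    exact Filter.cofinite_inf_principal_neBot_iff.mpr hK
  have hxc : Tendsto (fun k => xk k i) L (𝓝 (xstar i)) :=
    ((EuclideanSpace.proj (𝕜 := ℝ) i).continuous.tendsto _).comp hconv'
  have hxnn : ∀ k, 0 ≤ xk k i := fun k => (hKKT k).1 i
  have hxpos : 0 < xstar i :=
    lt_of_le_of_ne (ge_of_tendsto' hxc hxnn) (Ne.symm hxi)
  -- εk → 0
  have hε0 : Tendsto εk atTop (𝓝 0) := by
    apply squeeze_zero' (Eventually.of_forall hεnn) _ hαε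
    filter_upwards [hα.eventually_ge_atTop 1] with k hk
    calc εk k = 1 * εk k := (one_mul _).symm
    _ ≤ αk k * εk k := mul_le_mul_of_nonneg_right hk (hεnn k)
  set C := deriv (p i) 0 with hC
  have hmono : ∀ t, 0 ≤ t → C ≤ deriv (p i) t := by
    intro t ht
    exact (hconv i).monotoneOn_deriv
      (fun x _ => ((hp i).differentiable one_ne_zero).differentiableAt)
      (Set.mem_univ 0) (Set.mem_univ t) ht
  -- the key quantity tends to atTop along L
  have hT : Tendsto (fun k => αk k * xk k i + (C - 2 * εk k)) L atTop := by
    apply Tendsto.atTop_add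
      ((hα.mono_left inf_le_left).atTop_mul_pos hxpos hxc)
    have : Tendsto (fun k => C - 2 * εk k) atTop (𝓝 (C - 2 * 0)) :=
      tendsto_const_nhds.sub (tendsto_const_nhds.mul hε0)
    simpa using this.mono_left inf_le_left
  have hev : ∀ᶠ k in L, yk k i ≤ εk k := by
    filter_upwards [hT.eventually_gt_atTop 0] with k hk
    obtain ⟨hx0, hy0, _, _, hνy0, _, h7, _, _, _, h11⟩ := hKKT k
    have hcomp : |deriv (p i) (yk k i) + αk k * xk k i - νyk k i| ≤ εk k :=
      le_trans (abs_apply_le_norm_vec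
        (fun j => deriv (p j) (yk k j) + αk k * xk k j - νyk k j) i) h7
    have hν : C + αk k * xk k i - εk k ≤ νyk k i := by
      have := abs_le.mp hcomp
      have h2 := hmono (yk k i) (hy0 i)
      linarith [this.2]
    have hνgt : εk k < νyk k i := by linarith
    rcases min_le_iff.mp (h11 i) with h | h
    · exact h
    · linarith
  apply squeeze_zero' (Eventually.of_forall fun k =>
    mul_nonneg (hαpos k).le ((hKKT k).2.1 i)) _ (hαε.mono_left inf_le_left)
  filter_upwards [hev] with k hk
  exact mul_le_mul_of_nonneg_left hk (hαpos k).le
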